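/- Let k ≥ 2 and s ≥ 2 be integers. Let f, g be formal power series in two variables t, τ over ℂ, let h be a formal power series in one variable x over ℂ whose coefficients of x^i vanish for all i < s and whose coefficient of x^s is nonzero, and set u = τ^k + t·f (a power series with zero constant term, so the substitution h(u) is defined). Then u^{k·s − 1} does not divide t·g − h(u) in ℂ[[t, τ]]. -/

import Mathlib

open MvPowerSeries

private lemma coeff_X0_mul_aux (m : Fin 2 →₀ ℕ) (hm : m 0 = 0)
    (A : MvPowerSeries (Fin 2) ℂ) :
    (coeff m) ((X 0 : MvPowerSeries (Fin 2) ℂ) * A) = 0 := by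
  rw [X_def, coeff_monomial_mul, if_neg]
  intro hle
  have := hle 0
  simp [hm] at this

private lemma pow_decomp (k : ℕ) (f : MvPowerSeries (Fin 2) ℂ) :
    ∀ i : ℕ, ∃ v : MvPowerSeries (Fin 2) ℂ,
      ((X 1 : MvPowerSeries (Fin 2) ℂ) ^ k + X 0 * f) ^ i
        = (X 1 : MvPowerSeries (Fin 2) ℂ) ^ (k * i) + X 0 * v := by
  intro i
  induction i with
  | zero => exact ⟨0, by simp⟩
  | succ n ih =>
    obtain ⟨v, hv⟩ := ih
    refine ⟨f * X 1 ^ (k * n) + X 1 ^ k * v + X 0 * (f * v), ?_⟩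
    rw [pow_succ, hv, Nat.mul_succ, pow_add]
    ring

/-- Non-cancellation step in the proof of Proposition 2.2 ruling out tangency order
`s > 1` at the totally ramified point of a `k`-fold cover.  Here `t = X 0` and
`τ = X 1` are the two variables, `u = τ^k + t·f`, and `H` is the substitution `h(u)`
of `u` into the one-variable power series `h` (characterized coefficientwise: since
`u` has zero constant term, `coeff m (u^i) = 0` for `i > m 0 + m 1`, so the defining
sum is finite).  The conclusion is that `u^{k·s-1}` does not divide `t·g - h(u)`. -/
theorem stmt10 (k s : ℕ) (hk : 2 ≤ k) (hs : 2 ≤ s)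
    (f g : MvPowerSeries (Fin 2) ℂ) (h : PowerSeries ℂ)
    (hvanish : ∀ i < s, PowerSeries.coeff i h = 0)
    (hcoeff : PowerSeries.coeff s h ≠ 0)
    (u : MvPowerSeries (Fin 2) ℂ)
    (hu : u = (X 1 : MvPowerSeries (Fin 2) ℂ) ^ k + (X 0 : MvPowerSeries (Fin 2) ℂ) * f)
    (H : MvPowerSeries (Fin 2) ℂ)
    (hH : ∀ m : Fin 2 →₀ ℕ,
      (coeff m) H =
        ∑ i ∈ Finset.range (m 0 + m 1 + 1),
          PowerSeries.coeff i h * (coeff m) (u ^ i)) :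
    ¬ (u ^ (k * s - 1) ∣ (X 0 : MvPowerSeries (Fin 2) ℂ) * g - H) := by
  rintro ⟨q, hq⟩
  set m : Fin 2 →₀ ℕ := Finsupp.single 1 (k * s) with hm
  have hm0 : m 0 = 0 := by simp [hm]
  have hm1 : m 1 = k * s := by simp [hm]
  -- coefficient of u^i at m
  have hui : ∀ i : ℕ, (coeff m) (u ^ i) = if i = s then 1 else 0 := by
    intro i
    obtain ⟨v, hv⟩ := pow_decomp k f i
    rw [hu, hv, map_add, coeff_X0_mul_aux m hm0, add_zero, X_pow_eq, coeff_monomial]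
    have hks : (2 : ℕ) ≤ k * s := le_trans hk (Nat.le_mul_of_pos_right k (by omega))
    by_cases his : i = s
    · simp [his, hm]
    · rw [if_neg, if_neg his]
      intro hmi
      apply his
      have := DFunLike.congr_fun hmi 1
      simp [hm] at this
      rcases this with h1 | h1 <;> omega
  -- coefficient of LHS
  have hL : (coeff m) ((X 0 : MvPowerSeries (Fin 2) ℂ) * g - H) =
      - PowerSeries.coeff s h := by
    rw [map_sub, coeff_X0_mul_aux m hm0, hH m, zero_sub, neg_inj]
    rw [Finset.sum_eq_single s]
    · rw [hui s, if_pos rfl, mul_one]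
    · intro i _ his
      rw [hui i, if_neg his, mul_zero]
    · intro hsm
      exfalso
      apply hsm
      rw [Finset.mem_range, hm0, hm1]
      have : s ≤ k * s := Nat.le_mul_of_pos_left s (by omega)
      omega
  -- coefficient of RHS
  have hks : k * s < k * (k * s - 1) := by
    have h2s : 2 * s ≤ k * s := Nat.mul_le_mul_right s hk
    exact Nat.mul_lt_mul_of_pos_left (by omega) (by omega)
  have hR : (coeff m) (u ^ (k * s - 1) * q) = 0 := by
    obtain ⟨v, hv⟩ := pow_decomp k f (k * s - 1)
    rw [hu, hv, add_mul, map_add, mul_assoc, coeff_X0_mul_aux m hm0, add_zero,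
      X_pow_eq, coeff_monomial_mul, if_neg]
    intro hle
    have := hle 1
    rw [hm1] at this
    simp at this
    omega
  rw [hq, hR] at hL
  exact hcoeff (by simpa using hL.symm)
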